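/- Let I ⊆ ℝ be an open interval, a, b, f₂ : ℝ → ℝ with f₂(x) + b(x)² ≥ 0 on I, let ε ∈ {1, −1}, and set w(x) = −b(x) + ε·√(f₂(x) + b(x)²); assume w(x) ≠ 0 on I. Let E be differentiable on I with E'(x) = −f₂(x)/(2w(x)), and let J be differentiable on I with J(x) ≠ 0 and J'(x) = a(x)·exp(E(x)) for all x ∈ I. Define c(x) = w(x)·exp(E(x)) / (2J(x)). Then y_p(x) = J(x)·exp(−E(x)) solves the Riccati equation y_p'(x) = a(x) + b(x)y_p(x) + c(x)y_p(x)² for all x ∈ I. -/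

import Mathlib

/-- Particular solution underlying Theorem 4 (Case 4): with
`w = −b + ε√(f₂ + b²) ≠ 0`, `E' = −f₂/(2w)`, `J ≠ 0`, `J' = a · exp E` and
`c = w · exp E / (2J)`, the function `y_p = J · exp(−E)` solves the Riccati
equation. -/
theorem riccati_case4_particular
    (p q : ℝ) (a b c f₂ E J : ℝ → ℝ) (ε : ℝ) (hε : ε = 1 ∨ ε = -1)
    (hnonneg : ∀ x ∈ Set.Ioo p q, f₂ x + b x ^ 2 ≥ 0)
    (hw : ∀ x ∈ Set.Ioo p q, -b x + ε * Real.sqrt (f₂ x + b x ^ 2) ≠ 0)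
    (hE : ∀ x ∈ Set.Ioo p q,
      HasDerivAt E (-f₂ x / (2 * (-b x + ε * Real.sqrt (f₂ x + b x ^ 2)))) x)
    (hJne : ∀ x ∈ Set.Ioo p q, J x ≠ 0)
    (hJ : ∀ x ∈ Set.Ioo p q, HasDerivAt J (a x * Real.exp (E x)) x)
    (hcdef : ∀ x ∈ Set.Ioo p q,
      c x = (-b x + ε * Real.sqrt (f₂ x + b x ^ 2)) * Real.exp (E x) / (2 * J x)) :
    ∀ x ∈ Set.Ioo p q,
      HasDerivAt (fun t => J t * Real.exp (-E t))
        (a x + b x * (J x * Real.exp (-E x))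
          + c x * (J x * Real.exp (-E x)) ^ 2) x := by
  intro x hx
  have hs : Real.sqrt (f₂ x + b x ^ 2) ^ 2 = f₂ x + b x ^ 2 :=
    Real.sq_sqrt (hnonneg x hx)
  have hε2 : ε ^ 2 = 1 := by rcases hε with h | h <;> simp [h]
  set w := -b x + ε * Real.sqrt (f₂ x + b x ^ 2) with hwdef
  clear_value w
  have hwne : w ≠ 0 := hwdef ▸ hw x hx
  have hJx := hJ x hx
  have hEx := hE x hx
  rw [← hwdef] at hEx
  have hexp : HasDerivAt (fun t => Real.exp (-E t))
      (Real.exp (-E x) * -(-f₂ x / (2 * w))) x := (hEx.neg).exp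
  have hmul := hJx.mul hexp
  convert hmul using 1
  · rfl
  · rfl
  · rfl
  have h1 : w + b x = ε * Real.sqrt (f₂ x + b x ^ 2) := by rw [hwdef]; ring
  have h2 : (w + b x) ^ 2 = f₂ x + b x ^ 2 := by
    rw [h1, mul_pow, hε2, hs, one_mul]
  have hkey : f₂ x = 2 * b x * w + w ^ 2 := by nlinarith [h2]
  rw [hcdef x hx, ← hwdef]
  have hJxne := hJne x hx
  have he : Real.exp (E x) * Real.exp (-E x) = 1 := by
    rw [← Real.exp_add]; simp
  field_simp
  linear_combination (-(J x) * Real.exp (-E x)) * hkey +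
    (w ^ 2 * J x * Real.exp (-E x) - 2 * w * a x) * he
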